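/- Let A and D be diagonal n×n real matrices with A invertible, let C be an invertible n×n real matrix, and suppose there exist a tridiagonal matrix T and a diagonal matrix Λ such that rank(T·C − C·Λ) ≤ 1. Then S := A T A⁻¹ is tridiagonal and rank(S·(ACDC⁻¹) − (ACDC⁻¹)·T) ≤ 2. That is, the layer ACDC⁻¹ has displacement rank at most 2 with respect to tridiagonal operators. -/
import Mathlib


open Matrix

lemma my_rank_add_le {n : ℕ} (X Y : Matrix (Fin n) (Fin n) ℝ) :
    (X + Y).rank ≤ X.rank + Y.rank := by
  have hle : LinearMap.range (X + Y).mulVecLin ≤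
      LinearMap.range X.mulVecLin ⊔ LinearMap.range Y.mulVecLin := by
    rintro _ ⟨v, rfl⟩
    exact Submodule.mem_sup.2 ⟨X.mulVecLin v, ⟨v, rfl⟩, Y.mulVecLin v, ⟨v, rfl⟩, by
      simp [Matrix.mulVecLin_add]⟩
  calc (X + Y).rank ≤ Module.finrank ℝ
        ↥(LinearMap.range X.mulVecLin ⊔ LinearMap.range Y.mulVecLin) :=
        Submodule.finrank_mono hle
    _ ≤ X.rank + Y.rank :=
        Submodule.finrank_add_le_finrank_add_finrank _ _

/-- **The ACDC⁻¹ layer has displacement rank at most 2 with respect to tridiagonal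
operators.**
If `A`, `D` are diagonal with `A` invertible, `C` is invertible, and there are a
tridiagonal `T` and diagonal `Lam` with `rank (T*C - C*Lam) ≤ 1`, then `S = A*T*A⁻¹` is
tridiagonal and `rank (S*(A*C*D*C⁻¹) - (A*C*D*C⁻¹)*T) ≤ 2`. -/
theorem acdc_displacement_rank (n : ℕ)
    (A D C T Lam : Matrix (Fin n) (Fin n) ℝ)
    (hA : A.IsDiag) (hD : D.IsDiag)
    (hAu : IsUnit A.det) (hCu : IsUnit C.det)
    (hT : ∀ i j : Fin n, ((i : ℤ) - (j : ℤ)).natAbs > 1 → T i j = 0)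
    (hLam : Lam.IsDiag)
    (hdisp : (T * C - C * Lam).rank ≤ 1) :
    (∀ i j : Fin n, ((i : ℤ) - (j : ℤ)).natAbs > 1 → (A * T * A⁻¹) i j = 0) ∧
      ((A * T * A⁻¹) * (A * C * D * C⁻¹) - (A * C * D * C⁻¹) * T).rank ≤ 2 := by
  have hAd : Matrix.diagonal A.diag = A := hA.diagonal_diag
  have hCC : C * C⁻¹ = 1 := mul_nonsing_inv C hCu
  have hCC' : C⁻¹ * C = 1 := nonsing_inv_mul C hCu
  have hAA' : A⁻¹ * A = 1 := nonsing_inv_mul A hAu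
  constructor
  · intro i j hij
    have hAinv : A⁻¹ = Matrix.diagonal (Ring.inverse A.diag) := by
      conv_lhs => rw [← hAd]
      rw [Matrix.inv_diagonal]
    rw [hAinv, ← hAd]
    simp only [Matrix.mul_apply, Matrix.diagonal_apply, ite_mul, zero_mul,
      Finset.sum_ite_eq, Finset.mem_univ, if_true, mul_ite, mul_zero,
      Finset.sum_ite_eq', hT i j hij, zero_mul, mul_zero]
  · set E := T * C - C * Lam with hE
    have hTC : T * C = C * Lam + E := by rw [hE]; abel
    have hDL : D * Lam = Lam * D := by
      rw [← hD.diagonal_diag, ← hLam.diagonal_diag]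
      simp [Matrix.diagonal_mul_diagonal, mul_comm]
    have hT' : T = (C * Lam + E) * C⁻¹ := by
      rw [← hTC, Matrix.mul_assoc, hCC, Matrix.mul_one]
    have key : (A * T * A⁻¹) * (A * C * D * C⁻¹) - (A * C * D * C⁻¹) * T
        = A * E * (D * C⁻¹) + -((A * C * D * C⁻¹) * (E * C⁻¹)) := by
      have h1 : (A * T * A⁻¹) * (A * C * D * C⁻¹) = A * (T * C) * D * C⁻¹ := by
        calc (A * T * A⁻¹) * (A * C * D * C⁻¹)
            = A * T * (A⁻¹ * A) * C * D * C⁻¹ := by noncomm_ring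
          _ = A * (T * C) * D * C⁻¹ := by rw [hAA']; noncomm_ring
      have h2 : A * (C * Lam + E) * D * C⁻¹
          = A * C * (Lam * D) * C⁻¹ + A * E * (D * C⁻¹) := by
        noncomm_ring
      have h3 : (A * C * D * C⁻¹) * ((C * Lam + E) * C⁻¹)
          = A * C * (D * (C⁻¹ * C)) * (Lam * C⁻¹) + (A * C * D * C⁻¹) * (E * C⁻¹) := by
        noncomm_ring
      rw [hCC', Matrix.mul_one] at h3
      rw [h1, hTC, hT', h2, h3, ← hDL]
      noncomm_ring
    rw [key]
    calc (A * E * (D * C⁻¹) + -((A * C * D * C⁻¹) * (E * C⁻¹))).rank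
        ≤ (A * E * (D * C⁻¹)).rank + (-((A * C * D * C⁻¹) * (E * C⁻¹))).rank :=
          my_rank_add_le _ _
      _ ≤ 1 + 1 := by
          gcongr
          · calc (A * E * (D * C⁻¹)).rank ≤ (A * E).rank := Matrix.rank_mul_le_left _ _
              _ ≤ E.rank := Matrix.rank_mul_le_right _ _
              _ ≤ 1 := hdisp
          · rw [show -((A * C * D * C⁻¹) * (E * C⁻¹))
                = (-1 : Matrix (Fin n) (Fin n) ℝ) * ((A * C * D * C⁻¹) * (E * C⁻¹)) by
                rw [neg_one_mul]]
            calc ((-1 : Matrix (Fin n) (Fin n) ℝ) * ((A * C * D * C⁻¹) * (E * C⁻¹))).rank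
                ≤ ((A * C * D * C⁻¹) * (E * C⁻¹)).rank := Matrix.rank_mul_le_right _ _
              _ ≤ (E * C⁻¹).rank := Matrix.rank_mul_le_right _ _
              _ ≤ E.rank := Matrix.rank_mul_le_left _ _
              _ ≤ 1 := hdisp
      _ = 2 := rfl
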